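/- In the algebra E′, the bidegree (5, 133) component E′^{5,133} is a one-dimensional F₂-vector space with basis the class of J₀; moreover the monomials h₀³h₁h₇, h₀h₁²h₆², and h₀h₂h₅²h₆ all equal 0 in E′. (This verifies Ext_A^{5,5+128}(ℤ/2,ℤ/2) = ⟨J₀⟩.) -/

import Mathlib

noncomputable section

open MvPolynomial

/-- Generators of Chen's algebra `E′` in homological degrees ≤ 5.
Here `g i` denotes the generator `g_{i+1}` (the family `g` starts at index 1). -/
inductive Gen : Type
  | h (i : ℕ)
  | c (i : ℕ)
  | d (i : ℕ)
  | e (i : ℕ)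
  | f (i : ℕ)
  | g (i : ℕ)
  | p (i : ℕ)
  | D3 (i : ℕ)
  | p' (i : ℕ)
  | P1h1
  | P1h2
  | n (i : ℕ)
  | x (i : ℕ)
  | D1 (i : ℕ)
  | H1 (i : ℕ)
  | Q3 (i : ℕ)
  | K (i : ℕ)
  | J (i : ℕ)
  | T (i : ℕ)
  | V (i : ℕ)
  | V' (i : ℕ)
  | U (i : ℕ)

/-- Homological degree of the generators. -/
def hdeg : Gen → ℕ
  | .h _ => 1
  | .c _ => 3
  | .d _ => 4
  | .e _ => 4
  | .f _ => 4
  | .g _ => 4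
  | .p _ => 4
  | .D3 _ => 4
  | .p' _ => 4
  | _ => 5

/-- Internal degree of the generators. -/
def ideg : Gen → ℕ
  | .h i => 2 ^ i
  | .c i => 2 ^ (i + 3) + 2 ^ (i + 1) + 2 ^ i
  | .d i => 2 ^ (i + 4) + 2 ^ (i + 1)
  | .e i => 2 ^ (i + 4) + 2 ^ (i + 2) + 2 ^ i
  | .f i => 2 ^ (i + 4) + 2 ^ (i + 2) + 2 ^ (i + 1)
  | .g i => 2 ^ (i + 4) + 2 ^ (i + 3)      -- internal degree of `g_{i+1}`
  | .p i => 2 ^ (i + 5) + 2 ^ (i + 2) + 2 ^ i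
  | .D3 i => 2 ^ (i + 6) + 2 ^ i
  | .p' i => 2 ^ (i + 6) + 2 ^ (i + 3) + 2 ^ i
  | .P1h1 => 14
  | .P1h2 => 16
  | .n i => 2 ^ (i + 5) + 2 ^ (i + 2)
  | .x i => 2 ^ (i + 5) + 2 ^ (i + 3) + 2 ^ (i + 1)
  | .D1 i => 2 ^ (i + 5) + 2 ^ (i + 4) + 2 ^ (i + 2) + 2 ^ i
  | .H1 i => 2 ^ (i + 6) + 2 ^ (i + 1) + 2 ^ i
  | .Q3 i => 2 ^ (i + 6) + 2 ^ (i + 3)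
  | .K i => 2 ^ (i + 7) + 2 ^ (i + 1)
  | .J i => 2 ^ (i + 7) + 2 ^ (i + 2) + 2 ^ i
  | .T i => 2 ^ (i + 7) + 2 ^ (i + 4) + 2 ^ (i + 1)
  | .V i => 2 ^ (i + 7) + 2 ^ (i + 5) + 2 ^ i
  | .V' i => 2 ^ (i + 8) + 2 ^ i
  | .U i => 2 ^ (i + 8) + 2 ^ (i + 3) + 2 ^ i

abbrev P := MvPolynomial Gen (ZMod 2)

/-- Chen's relations in homological degrees ≤ 5: the relations
`hᵢhᵢ₊₁ = 0`, `hᵢhᵢ₊₂² = 0`, `hᵢ²hᵢ₊₃² = 0`, `hᵢ³ = hᵢ₋₁²hᵢ₊₁` (i ≥ 1),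
`hⱼcᵢ = 0` for `j ∈ {i-1, i, i+2, i+3}`, together with Chen's 39 families of
degree-5 relations (with `g j` standing for `g_{j+1}`). -/
def rels : Set P :=
  ⋃ j : ℕ,
    ({ X (Gen.h j) * X (Gen.h (j + 1)),
       X (Gen.h j) * X (Gen.h (j + 2)) ^ 2,
       X (Gen.h j) ^ 2 * X (Gen.h (j + 3)) ^ 2,
       X (Gen.h (j + 1)) ^ 3 - X (Gen.h j) ^ 2 * X (Gen.h (j + 2)),
       X (Gen.h j) * X (Gen.c (j + 1)),
       X (Gen.h j) * X (Gen.c j),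
       X (Gen.h (j + 2)) * X (Gen.c j),
       X (Gen.h (j + 3)) * X (Gen.c j),
       -- Chen's degree-5 relations:
       X (Gen.h (j + 4)) ^ 2 * X (Gen.c j),
       X (Gen.h (j + 3)) * X (Gen.h j) * X (Gen.c (j + 2)),
       X (Gen.h (j + 1)) ^ 2 * X (Gen.c j),
       X (Gen.h j) * X (Gen.d (j + 1)),
       X (Gen.h (j + 3)) * X (Gen.d j),
       X (Gen.h (j + 4)) * X (Gen.d j),
       X (Gen.h j) * X (Gen.e (j + 1)),
       X (Gen.h (j + 4)) * X (Gen.e j),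
       X (Gen.h (j + 1)) * X (Gen.f j),
       X (Gen.h (j + 3)) * X (Gen.f j),
       X (Gen.h (j + 4)) * X (Gen.f j),
       X (Gen.h (j + 3)) * X (Gen.g j),
       X (Gen.h j) * X (Gen.p (j + 1)),
       X (Gen.h (j + 1)) * X (Gen.p j),
       X (Gen.h (j + 2)) * X (Gen.p j),
       X (Gen.h (j + 4)) * X (Gen.p j),
       X (Gen.h (j + 5)) * X (Gen.p j),
       X (Gen.h j) * X (Gen.D3 (j + 1)),
       X (Gen.h j) * X (Gen.D3 j),
       X (Gen.h (j + 5)) * X (Gen.D3 j),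
       X (Gen.h (j + 6)) * X (Gen.D3 j),
       X (Gen.h j) * X (Gen.p' (j + 1)),
       X (Gen.h (j + 2)) * X (Gen.p' j),
       X (Gen.h (j + 3)) * X (Gen.p' j),
       X (Gen.h (j + 6)) * X (Gen.p' j),
       X (Gen.h (j + 4)) * X (Gen.h (j + 1)) * X (Gen.c j) - X (Gen.h (j + 3)) * X (Gen.e j),
       X (Gen.h (j + 4)) * X (Gen.h j) * X (Gen.c (j + 3)) - X (Gen.h (j + 5)) * X (Gen.p' j),
       X (Gen.h (j + 5)) ^ 2 * X (Gen.c j) - X (Gen.h (j + 1)) * X (Gen.p' j),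
       X (Gen.h j) * X (Gen.d (j + 2)) - X (Gen.h (j + 3)) * X (Gen.D3 j),
       X (Gen.h (j + 1)) * X (Gen.d (j + 1)) - X (Gen.h j) * X (Gen.p j),
       X (Gen.h (j + 2)) * X (Gen.d (j + 1)) - X (Gen.h (j + 4)) * X (Gen.g j),
       X (Gen.h (j + 2)) * X (Gen.d j) - X (Gen.h j) * X (Gen.e j),
       X (Gen.h (j + 1)) * X (Gen.e j) - X (Gen.h j) * X (Gen.f j),
       X (Gen.h (j + 2)) * X (Gen.e (j + 1)) - X (Gen.h j) ^ 2 * X (Gen.c (j + 2)),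
       X (Gen.h (j + 2)) * X (Gen.e j) - X (Gen.h j) * X (Gen.g j),
       X (Gen.h j) * X (Gen.f (j + 2)) - X (Gen.h (j + 4)) * X (Gen.p' j),
       X (Gen.h j) * X (Gen.f (j + 1)) - X (Gen.h (j + 3)) * X (Gen.p j),
       X (Gen.h (j + 2)) * X (Gen.f j) - X (Gen.h (j + 1)) * X (Gen.g j),
       X (Gen.h (j + 3)) * X (Gen.g (j + 1)) - X (Gen.h (j + 5)) * X (Gen.g j) } : Set P)

def relIdeal : Ideal P := Ideal.span rels

/-- Chen's algebra `E′`, isomorphic to `Ext_A^{k,*}(ℤ/2, ℤ/2)` in homological degrees `k ≤ 5`. -/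
abbrev E' := P ⧸ relIdeal

def mkE : P →ₐ[ZMod 2] E' := Ideal.Quotient.mkₐ (ZMod 2) relIdeal

/-- The bidegree `(k, d)` component `E′^{k,d}` of `E′`: the image of the space of polynomials
that are weighted homogeneous of homological degree `k` and internal degree `d`. -/
def component (k d : ℕ) : Submodule (ZMod 2) E' :=
  Submodule.map mkE.toLinearMap
    (weightedHomogeneousSubmodule (ZMod 2) hdeg k ⊓
      weightedHomogeneousSubmodule (ZMod 2) ideg d)

lemma weight_eq_sum (w : Gen → ℕ) (s : Gen →₀ ℕ) :
    Finsupp.weight w s = (s.toMultiset.map w).sum := by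
  induction s using Finsupp.induction with
  | zero => simp
  | single_add a n f _ _ ih =>
      rw [map_add, ih, Finsupp.toMultiset_add, Multiset.map_add, Multiset.sum_add,
        Finsupp.toMultiset_single]
      rw [Multiset.map_nsmul, Multiset.sum_nsmul]
      simp [Finsupp.weight_apply, Finsupp.sum_single_index, mul_comm]

lemma monomial_eq_prod (s : Gen →₀ ℕ) : (monomial s 1 : P) = (s.toMultiset.map X).prod := by
  induction s using Finsupp.induction with
  | zero => simp
  | single_add a n f _ _ ih =>
      rw [← one_mul (1 : ZMod 2), ← monomial_mul, ih, Finsupp.toMultiset_add,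
        Multiset.map_add, Multiset.prod_add, Finsupp.toMultiset_single]
      rw [Multiset.map_nsmul, Multiset.prod_nsmul]
      simp [X_pow_eq_monomial]
lemma one_le_hdeg (g : Gen) : 1 ≤ hdeg g := by cases g <;> simp [hdeg]

lemma hdeg_cases (g : Gen) : hdeg g = 1 ∨ hdeg g = 3 ∨ hdeg g = 4 ∨ hdeg g = 5 := by
  cases g <;> simp [hdeg]

lemma eq_h {g : Gen} (h : hdeg g = 1) : ∃ i, g = .h i := by
  cases g <;> simp_all [hdeg]

lemma eq_c {g : Gen} (h : hdeg g = 3) : ∃ i, g = .c i := by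
  cases g <;> simp_all [hdeg]

lemma eq_d4 {g : Gen} (h : hdeg g = 4) :
    (∃ i, g = .d i) ∨ (∃ i, g = .e i) ∨ (∃ i, g = .f i) ∨ (∃ i, g = .g i) ∨
    (∃ i, g = .p i) ∨ (∃ i, g = .D3 i) ∨ (∃ i, g = .p' i) := by
  cases g <;> simp_all [hdeg]

lemma eq_d5 {g : Gen} (h : hdeg g = 5) :
    g = .P1h1 ∨ g = .P1h2 ∨ (∃ i, g = .n i) ∨ (∃ i, g = .x i) ∨ (∃ i, g = .D1 i) ∨
    (∃ i, g = .H1 i) ∨ (∃ i, g = .Q3 i) ∨ (∃ i, g = .K i) ∨ (∃ i, g = .J i) ∨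
    (∃ i, g = .T i) ∨ (∃ i, g = .V i) ∨ (∃ i, g = .V' i) ∨ (∃ i, g = .U i) := by
  cases g <;> simp_all [hdeg]

lemma pow_le_133 {a : ℕ} (h : 2 ^ a ≤ 133) : a ≤ 7 := by
  by_contra hc
  push_neg at hc
  have h8 : (2:ℕ)^8 ≤ 2^a := Nat.pow_le_pow_right (by norm_num) hc
  norm_num at h8
  omega

lemma len_le_sum (l : List Gen) : l.length ≤ (l.map hdeg).sum := by
  induction l with
  | nil => simp
  | cons a t ih => have := one_le_hdeg a; simp; omega
lemma rel_hh (x : ℕ) : (X (Gen.h x) * X (Gen.h (x+1)) : P) ∈ relIdeal := by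
  apply Ideal.subset_span
  exact Set.mem_iUnion.2 ⟨x, by left; rfl⟩

lemma mem_rel_of_hh {m : P} (x : ℕ) (q : P) (h : m = X (Gen.h x) * X (Gen.h (x+1)) * q) :
    m ∈ relIdeal := h ▸ Ideal.mul_mem_right _ _ (rel_hh x)

lemma mkE_eq_zero {m : P} (hm : m ∈ relIdeal) : mkE m = 0 := by
  rw [mkE, Ideal.Quotient.mkₐ_eq_mk, Ideal.Quotient.eq_zero_iff_mem]
  exact hm

/-- evaluation sending `J i ↦ 1`, everything else to `0`. -/
def v : Gen → ZMod 2 := fun g => match g with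
  | .J _ => 1
  | _ => 0

@[simp] lemma v_h (i : ℕ) : v (.h i) = 0 := rfl
@[simp] lemma v_c (i : ℕ) : v (.c i) = 0 := rfl
@[simp] lemma v_J (i : ℕ) : v (.J i) = 1 := rfl

lemma aeval_v_rels : relIdeal ≤ RingHom.ker (aeval (R := ZMod 2) v).toRingHom := by
  rw [relIdeal, Ideal.span_le]
  rintro r hr
  simp only [rels, Set.mem_iUnion] at hr
  obtain ⟨j, hj⟩ := hr
  simp only [Set.mem_insert_iff, Set.mem_singleton_iff] at hj
  simp only [SetLike.mem_coe, RingHom.mem_ker, AlgHom.toRingHom_eq_coe, RingHom.coe_coe]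
  rcases hj with rfl|rfl|rfl|rfl|rfl|rfl|rfl|rfl|rfl|rfl|rfl|rfl|rfl|rfl|rfl|rfl|rfl|rfl|rfl|rfl|rfl|rfl|rfl|rfl|rfl|rfl|rfl|rfl|rfl|rfl|rfl|rfl|rfl|rfl|rfl|rfl|rfl|rfl|rfl|rfl|rfl|rfl|rfl|rfl|rfl|rfl|rfl <;>
    simp [v]

lemma mkE_X_J_ne : mkE (X (Gen.J 0)) ≠ 0 := by
  intro h
  have hmem : (X (Gen.J 0) : P) ∈ relIdeal := by
    rwa [mkE, Ideal.Quotient.mkₐ_eq_mk, Ideal.Quotient.eq_zero_iff_mem] at h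
  have := aeval_v_rels hmem
  simp only [RingHom.mem_ker, AlgHom.toRingHom_eq_coe, RingHom.coe_coe, aeval_X] at this
  simp [v] at this
lemma nod : ∀ (i : Fin 8) (j : Fin 4), 2^(i:ℕ) + (2^((j:ℕ)+4) + 2^((j:ℕ)+1)) ≠ 133 := by decide
lemma noe : ∀ (i : Fin 8) (j : Fin 4), 2^(i:ℕ) + (2^((j:ℕ)+4) + 2^((j:ℕ)+2) + 2^(j:ℕ)) ≠ 133 := by decide
lemma nof : ∀ (i : Fin 8) (j : Fin 4), 2^(i:ℕ) + (2^((j:ℕ)+4) + 2^((j:ℕ)+2) + 2^((j:ℕ)+1)) ≠ 133 := by decide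
lemma nog : ∀ (i : Fin 8) (j : Fin 4), 2^(i:ℕ) + (2^((j:ℕ)+4) + 2^((j:ℕ)+3)) ≠ 133 := by decide
lemma nop : ∀ (i : Fin 8) (j : Fin 4), 2^(i:ℕ) + (2^((j:ℕ)+5) + 2^((j:ℕ)+2) + 2^(j:ℕ)) ≠ 133 := by decide
lemma noD3 : ∀ (i : Fin 8) (j : Fin 4), 2^(i:ℕ) + (2^((j:ℕ)+6) + 2^(j:ℕ)) ≠ 133 := by decide
lemma nop' : ∀ (i : Fin 8) (j : Fin 4), 2^(i:ℕ) + (2^((j:ℕ)+6) + 2^((j:ℕ)+3) + 2^(j:ℕ)) ≠ 133 := by decide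
lemma noc : ∀ (x y : Fin 8) (j : Fin 5),
    2^(x:ℕ) + 2^(y:ℕ) + (2^((j:ℕ)+3) + 2^((j:ℕ)+1) + 2^(j:ℕ)) ≠ 133 := by decide
lemma consec5 : ∀ a b c d e : Fin 8,
    2^(a:ℕ) + 2^(b:ℕ) + 2^(c:ℕ) + 2^(d:ℕ) + 2^(e:ℕ) = 133 →
    ((b:ℕ) = a+1 ∨ (a:ℕ) = b+1 ∨ (c:ℕ) = a+1 ∨ (a:ℕ) = c+1 ∨ (d:ℕ) = a+1 ∨ (a:ℕ) = d+1 ∨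
     (e:ℕ) = a+1 ∨ (a:ℕ) = e+1 ∨ (c:ℕ) = b+1 ∨ (b:ℕ) = c+1 ∨ (d:ℕ) = b+1 ∨ (b:ℕ) = d+1 ∨
     (e:ℕ) = b+1 ∨ (b:ℕ) = e+1 ∨ (d:ℕ) = c+1 ∨ (c:ℕ) = d+1 ∨ (e:ℕ) = c+1 ∨ (c:ℕ) = e+1 ∨
     (e:ℕ) = d+1 ∨ (d:ℕ) = e+1) := by decide
lemma add_le_of_eq {a b n : ℕ} (h : a + b = n) : a ≤ n ∧ b ≤ n := by omega
lemma add_le_of_le {a b n : ℕ} (h : a + b ≤ n) : a ≤ n ∧ b ≤ n := by omega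

lemma nodN (i j : ℕ) (hi : i < 8) (hj : j < 4) : 2^i + (2^(j+4) + 2^(j+1)) ≠ 133 :=
  nod ⟨i, hi⟩ ⟨j, hj⟩
lemma noeN (i j : ℕ) (hi : i < 8) (hj : j < 4) : 2^i + (2^(j+4) + 2^(j+2) + 2^j) ≠ 133 :=
  noe ⟨i, hi⟩ ⟨j, hj⟩
lemma nofN (i j : ℕ) (hi : i < 8) (hj : j < 4) : 2^i + (2^(j+4) + 2^(j+2) + 2^(j+1)) ≠ 133 :=
  nof ⟨i, hi⟩ ⟨j, hj⟩
lemma nogN (i j : ℕ) (hi : i < 8) (hj : j < 4) : 2^i + (2^(j+4) + 2^(j+3)) ≠ 133 :=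
  nog ⟨i, hi⟩ ⟨j, hj⟩
lemma nopN (i j : ℕ) (hi : i < 8) (hj : j < 4) : 2^i + (2^(j+5) + 2^(j+2) + 2^j) ≠ 133 :=
  nop ⟨i, hi⟩ ⟨j, hj⟩
lemma noD3N (i j : ℕ) (hi : i < 8) (hj : j < 4) : 2^i + (2^(j+6) + 2^j) ≠ 133 :=
  noD3 ⟨i, hi⟩ ⟨j, hj⟩
lemma nop'N (i j : ℕ) (hi : i < 8) (hj : j < 4) : 2^i + (2^(j+6) + 2^(j+3) + 2^j) ≠ 133 :=
  nop' ⟨i, hi⟩ ⟨j, hj⟩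
lemma nocN (x y j : ℕ) (hx : x < 8) (hy : y < 8) (hj : j < 5) :
    2^x + 2^y + (2^(j+3) + 2^(j+1) + 2^j) ≠ 133 := noc ⟨x, hx⟩ ⟨y, hy⟩ ⟨j, hj⟩
lemma consec5N (a b c d e : ℕ) (ha : a < 8) (hb : b < 8) (hc : c < 8) (hd : d < 8)
    (he : e < 8) (h : 2^a + 2^b + 2^c + 2^d + 2^e = 133) :
    (b = a+1 ∨ a = b+1 ∨ c = a+1 ∨ a = c+1 ∨ d = a+1 ∨ a = d+1 ∨
     e = a+1 ∨ a = e+1 ∨ c = b+1 ∨ b = c+1 ∨ d = b+1 ∨ b = d+1 ∨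
     e = b+1 ∨ b = e+1 ∨ d = c+1 ∨ c = d+1 ∨ e = c+1 ∨ c = e+1 ∨
     e = d+1 ∨ d = e+1) := consec5 ⟨a,ha⟩ ⟨b,hb⟩ ⟨c,hc⟩ ⟨d,hd⟩ ⟨e,he⟩ h

lemma span_zero_helper {m : P} (x : ℕ) (q : P)
    (h : m = X (Gen.h x) * X (Gen.h (x+1)) * q) :
    mkE m ∈ Submodule.span (ZMod 2) {mkE (X (Gen.J 0))} := by
  rw [mkE_eq_zero (mem_rel_of_hh x q h)]; exact zero_mem _

set_option maxHeartbeats 2000000 in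
lemma list_case (l : List Gen) (h5 : (l.map hdeg).sum = 5) (h133 : (l.map ideg).sum = 133) :
    mkE (l.map X).prod ∈ Submodule.span (ZMod 2) {mkE (X (Gen.J 0))} := by
  have hlen : l.length ≤ 5 := by have := len_le_sum l; omega
  rcases l with _|⟨a,_|⟨b,_|⟨c,_|⟨d,_|⟨e,_|⟨f,t⟩⟩⟩⟩⟩⟩
  · simp at h5
  · -- one generator of hdeg 5
    simp only [List.map_cons, List.map_nil, List.sum_cons, List.sum_nil, add_zero] at h5 h133
    rcases eq_d5 h5 with rfl|rfl|⟨i,rfl⟩|⟨i,rfl⟩|⟨i,rfl⟩|⟨i,rfl⟩|⟨i,rfl⟩|⟨i,rfl⟩|⟨i,rfl⟩|⟨i,rfl⟩|⟨i,rfl⟩|⟨i,rfl⟩|⟨i,rfl⟩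
    · simp [ideg] at h133
    · simp [ideg] at h133
    · -- n
      simp only [ideg] at h133
      have hi : i ≤ 2 := by have := pow_le_133 (add_le_of_eq h133).1; omega
      interval_cases i <;> norm_num at h133
    · -- x
      simp only [ideg] at h133
      have hi : i ≤ 2 := by
        have := pow_le_133 (add_le_of_le (add_le_of_eq h133).1).1; omega
      interval_cases i <;> norm_num at h133
    · -- D1
      simp only [ideg] at h133
      have hi : i ≤ 2 := by
        have := pow_le_133 (add_le_of_le (add_le_of_le (add_le_of_eq h133).1).1).1; omega
      interval_cases i <;> norm_num at h133
    · -- H1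
      simp only [ideg] at h133
      have hi : i ≤ 1 := by
        have := pow_le_133 (add_le_of_le (add_le_of_eq h133).1).1; omega
      interval_cases i <;> norm_num at h133
    · -- Q3
      simp only [ideg] at h133
      have hi : i ≤ 1 := by have := pow_le_133 (add_le_of_eq h133).1; omega
      interval_cases i <;> norm_num at h133
    · -- K
      simp only [ideg] at h133
      have hi : i = 0 := by have := pow_le_133 (add_le_of_eq h133).1; omega
      subst hi; norm_num at h133
    · -- J : the surviving case
      simp only [ideg] at h133
      have hi : i = 0 := by
        have := pow_le_133 (add_le_of_le (add_le_of_eq h133).1).1; omega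
      subst hi
      simp only [List.map_cons, List.map_nil, List.prod_cons, List.prod_nil, mul_one]
      exact Submodule.mem_span_singleton_self _
    · -- T
      simp only [ideg] at h133
      have hi : i = 0 := by
        have := pow_le_133 (add_le_of_le (add_le_of_eq h133).1).1; omega
      subst hi; norm_num at h133
    · -- V
      simp only [ideg] at h133
      have hi : i = 0 := by
        have := pow_le_133 (add_le_of_le (add_le_of_eq h133).1).1; omega
      subst hi; norm_num at h133
    · -- V'
      simp only [ideg] at h133
      have := pow_le_133 (add_le_of_eq h133).1; omega
    · -- U
      simp only [ideg] at h133
      have := pow_le_133 (add_le_of_le (add_le_of_eq h133).1).1; omega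
  · -- two generators : hdeg 1 + 4
    simp only [List.map_cons, List.map_nil, List.sum_cons, List.sum_nil, add_zero] at h5 h133
    have ha := hdeg_cases a; have hb := hdeg_cases b
    have hsplit : (hdeg a = 1 ∧ hdeg b = 4) ∨ (hdeg a = 4 ∧ hdeg b = 1) := by omega
    rcases hsplit with ⟨h1, h4⟩ | ⟨h4, h1⟩
    · obtain ⟨i, rfl⟩ := eq_h h1
      rcases eq_d4 h4 with ⟨j,rfl⟩|⟨j,rfl⟩|⟨j,rfl⟩|⟨j,rfl⟩|⟨j,rfl⟩|⟨j,rfl⟩|⟨j,rfl⟩ <;>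
        simp only [ideg] at h133
      · exact absurd h133 (nodN i j
          (by have := pow_le_133 (add_le_of_eq h133).1; omega)
          (by have := pow_le_133 (add_le_of_le (add_le_of_eq h133).2).1; omega))
      · exact absurd h133 (noeN i j
          (by have := pow_le_133 (add_le_of_eq h133).1; omega)
          (by have := pow_le_133 (add_le_of_le (add_le_of_le (add_le_of_eq h133).2).1).1; omega))
      · exact absurd h133 (nofN i j
          (by have := pow_le_133 (add_le_of_eq h133).1; omega)
          (by have := pow_le_133 (add_le_of_le (add_le_of_le (add_le_of_eq h133).2).1).1; omega))
      · exact absurd h133 (nogN i j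
          (by have := pow_le_133 (add_le_of_eq h133).1; omega)
          (by have := pow_le_133 (add_le_of_le (add_le_of_eq h133).2).1; omega))
      · exact absurd h133 (nopN i j
          (by have := pow_le_133 (add_le_of_eq h133).1; omega)
          (by have := pow_le_133 (add_le_of_le (add_le_of_le (add_le_of_eq h133).2).1).1; omega))
      · exact absurd h133 (noD3N i j
          (by have := pow_le_133 (add_le_of_eq h133).1; omega)
          (by have := pow_le_133 (add_le_of_le (add_le_of_eq h133).2).1; omega))
      · exact absurd h133 (nop'N i j
          (by have := pow_le_133 (add_le_of_eq h133).1; omega)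
          (by have := pow_le_133 (add_le_of_le (add_le_of_le (add_le_of_eq h133).2).1).1; omega))
    · obtain ⟨i, rfl⟩ := eq_h h1
      rcases eq_d4 h4 with ⟨j,rfl⟩|⟨j,rfl⟩|⟨j,rfl⟩|⟨j,rfl⟩|⟨j,rfl⟩|⟨j,rfl⟩|⟨j,rfl⟩ <;>
        simp only [ideg] at h133
      · exact absurd (by linarith) (nodN i j
          (by have := pow_le_133 (add_le_of_eq h133).2; omega)
          (by have := pow_le_133 (add_le_of_le (add_le_of_eq h133).1).1; omega))
      · exact absurd (by linarith) (noeN i j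
          (by have := pow_le_133 (add_le_of_eq h133).2; omega)
          (by have := pow_le_133 (add_le_of_le (add_le_of_le (add_le_of_eq h133).1).1).1; omega))
      · exact absurd (by linarith) (nofN i j
          (by have := pow_le_133 (add_le_of_eq h133).2; omega)
          (by have := pow_le_133 (add_le_of_le (add_le_of_le (add_le_of_eq h133).1).1).1; omega))
      · exact absurd (by linarith) (nogN i j
          (by have := pow_le_133 (add_le_of_eq h133).2; omega)
          (by have := pow_le_133 (add_le_of_le (add_le_of_eq h133).1).1; omega))
      · exact absurd (by linarith) (nopN i j
          (by have := pow_le_133 (add_le_of_eq h133).2; omega)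
          (by have := pow_le_133 (add_le_of_le (add_le_of_le (add_le_of_eq h133).1).1).1; omega))
      · exact absurd (by linarith) (noD3N i j
          (by have := pow_le_133 (add_le_of_eq h133).2; omega)
          (by have := pow_le_133 (add_le_of_le (add_le_of_eq h133).1).1; omega))
      · exact absurd (by linarith) (nop'N i j
          (by have := pow_le_133 (add_le_of_eq h133).2; omega)
          (by have := pow_le_133 (add_le_of_le (add_le_of_le (add_le_of_eq h133).1).1).1; omega))
  · -- three generators : hdeg 1 + 1 + 3
    simp only [List.map_cons, List.map_nil, List.sum_cons, List.sum_nil, add_zero] at h5 h133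
    have ha := hdeg_cases a; have hb := hdeg_cases b; have hc := hdeg_cases c
    have hsplit : (hdeg a = 3 ∧ hdeg b = 1 ∧ hdeg c = 1) ∨
        (hdeg b = 3 ∧ hdeg a = 1 ∧ hdeg c = 1) ∨
        (hdeg c = 3 ∧ hdeg a = 1 ∧ hdeg b = 1) := by omega
    rcases hsplit with ⟨h3, h1, h2⟩ | ⟨h3, h1, h2⟩ | ⟨h3, h1, h2⟩ <;>
      obtain ⟨j, rfl⟩ := eq_c h3 <;>
      obtain ⟨x, rfl⟩ := eq_h h1 <;>
      obtain ⟨y, rfl⟩ := eq_h h2 <;>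
      simp only [ideg] at h133
    · exact absurd (by linarith : 2^x + 2^y + (2^(j+3) + 2^(j+1) + 2^j) = 133)
        (nocN x y j
          (by have := pow_le_133 (add_le_of_le (add_le_of_eq h133).2).1; omega)
          (by have := pow_le_133 (add_le_of_le (add_le_of_eq h133).2).2; omega)
          (by have := pow_le_133 (add_le_of_le (add_le_of_le (add_le_of_eq h133).1).1).1; omega))
    · exact absurd (by linarith : 2^x + 2^y + (2^(j+3) + 2^(j+1) + 2^j) = 133)
        (nocN x y j
          (by have := pow_le_133 (add_le_of_eq h133).1; omega)
          (by have := pow_le_133 (add_le_of_le (add_le_of_eq h133).2).2; omega)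
          (by have := pow_le_133 (add_le_of_le (add_le_of_le (add_le_of_le (add_le_of_eq h133).2).1).1).1; omega))
    · exact absurd (by linarith : 2^x + 2^y + (2^(j+3) + 2^(j+1) + 2^j) = 133)
        (nocN x y j
          (by have := pow_le_133 (add_le_of_eq h133).1; omega)
          (by have := pow_le_133 (add_le_of_le (add_le_of_eq h133).2).1; omega)
          (by have := pow_le_133 (add_le_of_le (add_le_of_le (add_le_of_le (add_le_of_eq h133).2).2).1).1; omega))
  · -- four generators : impossible
    simp only [List.map_cons, List.map_nil, List.sum_cons, List.sum_nil, add_zero] at h5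
    have ha := hdeg_cases a; have hb := hdeg_cases b
    have hc := hdeg_cases c; have hd := hdeg_cases d
    omega
  · -- five generators : all h's
    simp only [List.map_cons, List.map_nil, List.sum_cons, List.sum_nil, add_zero] at h5 h133
    have ha := hdeg_cases a; have hb := hdeg_cases b; have hc := hdeg_cases c
    have hd := hdeg_cases d; have he := hdeg_cases e
    have h1a : hdeg a = 1 := by omega
    have h1b : hdeg b = 1 := by omega
    have h1c : hdeg c = 1 := by omega
    have h1d : hdeg d = 1 := by omega
    have h1e : hdeg e = 1 := by omega
    obtain ⟨i1, rfl⟩ := eq_h h1a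
    obtain ⟨i2, rfl⟩ := eq_h h1b
    obtain ⟨i3, rfl⟩ := eq_h h1c
    obtain ⟨i4, rfl⟩ := eq_h h1d
    obtain ⟨i5, rfl⟩ := eq_h h1e
    simp only [ideg] at h133
    have hsum : 2^i1 + 2^i2 + 2^i3 + 2^i4 + 2^i5 = 133 := by linarith
    have b1 : i1 < 8 := by have := pow_le_133 (add_le_of_eq h133).1; omega
    have b2 : i2 < 8 := by have := pow_le_133 (add_le_of_le (add_le_of_eq h133).2).1; omega
    have b3 : i3 < 8 := by
      have := pow_le_133 (add_le_of_le (add_le_of_le (add_le_of_eq h133).2).2).1; omega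
    have b4 : i4 < 8 := by
      have := pow_le_133
        (add_le_of_le (add_le_of_le (add_le_of_le (add_le_of_eq h133).2).2).2).1; omega
    have b5 : i5 < 8 := by
      have := pow_le_133
        (add_le_of_le (add_le_of_le (add_le_of_le (add_le_of_eq h133).2).2).2).2; omega
    simp only [List.map_cons, List.map_nil, List.prod_cons, List.prod_nil, mul_one]
    rcases consec5N i1 i2 i3 i4 i5 b1 b2 b3 b4 b5 hsum with
      h|h|h|h|h|h|h|h|h|h|h|h|h|h|h|h|h|h|h|h
    · exact span_zero_helper i1 (X (Gen.h i3) * X (Gen.h i4) * X (Gen.h i5)) (by rw [h]; ring)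
    · exact span_zero_helper i2 (X (Gen.h i3) * X (Gen.h i4) * X (Gen.h i5)) (by rw [h]; ring)
    · exact span_zero_helper i1 (X (Gen.h i2) * X (Gen.h i4) * X (Gen.h i5)) (by rw [h]; ring)
    · exact span_zero_helper i3 (X (Gen.h i2) * X (Gen.h i4) * X (Gen.h i5)) (by rw [h]; ring)
    · exact span_zero_helper i1 (X (Gen.h i2) * X (Gen.h i3) * X (Gen.h i5)) (by rw [h]; ring)
    · exact span_zero_helper i4 (X (Gen.h i2) * X (Gen.h i3) * X (Gen.h i5)) (by rw [h]; ring)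
    · exact span_zero_helper i1 (X (Gen.h i2) * X (Gen.h i3) * X (Gen.h i4)) (by rw [h]; ring)
    · exact span_zero_helper i5 (X (Gen.h i2) * X (Gen.h i3) * X (Gen.h i4)) (by rw [h]; ring)
    · exact span_zero_helper i2 (X (Gen.h i1) * X (Gen.h i4) * X (Gen.h i5)) (by rw [h]; ring)
    · exact span_zero_helper i3 (X (Gen.h i1) * X (Gen.h i4) * X (Gen.h i5)) (by rw [h]; ring)
    · exact span_zero_helper i2 (X (Gen.h i1) * X (Gen.h i3) * X (Gen.h i5)) (by rw [h]; ring)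
    · exact span_zero_helper i4 (X (Gen.h i1) * X (Gen.h i3) * X (Gen.h i5)) (by rw [h]; ring)
    · exact span_zero_helper i2 (X (Gen.h i1) * X (Gen.h i3) * X (Gen.h i4)) (by rw [h]; ring)
    · exact span_zero_helper i5 (X (Gen.h i1) * X (Gen.h i3) * X (Gen.h i4)) (by rw [h]; ring)
    · exact span_zero_helper i3 (X (Gen.h i1) * X (Gen.h i2) * X (Gen.h i5)) (by rw [h]; ring)
    · exact span_zero_helper i4 (X (Gen.h i1) * X (Gen.h i2) * X (Gen.h i5)) (by rw [h]; ring)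
    · exact span_zero_helper i3 (X (Gen.h i1) * X (Gen.h i2) * X (Gen.h i4)) (by rw [h]; ring)
    · exact span_zero_helper i5 (X (Gen.h i1) * X (Gen.h i2) * X (Gen.h i4)) (by rw [h]; ring)
    · exact span_zero_helper i4 (X (Gen.h i1) * X (Gen.h i2) * X (Gen.h i3)) (by rw [h]; ring)
    · exact span_zero_helper i5 (X (Gen.h i1) * X (Gen.h i2) * X (Gen.h i3)) (by rw [h]; ring)
  · -- six or more : impossible
    simp only [List.length_cons] at hlen
    omega
lemma mono_mem (s : Gen →₀ ℕ) (h5 : Finsupp.weight hdeg s = 5)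
    (h133 : Finsupp.weight ideg s = 133) :
    mkE (monomial s 1) ∈ Submodule.span (ZMod 2) {mkE (X (Gen.J 0))} := by
  rw [weight_eq_sum, ← Multiset.coe_toList s.toMultiset, Multiset.map_coe,
    Multiset.sum_coe] at h5 h133
  rw [monomial_eq_prod, ← Multiset.coe_toList s.toMultiset, Multiset.map_coe,
    Multiset.prod_coe]
  exact list_case _ h5 h133

/-- `E′^{5,133}` is one-dimensional over `F₂` with basis the class of `J₀`; moreover
`h₀³h₁h₇ = h₀h₁²h₆² = h₀h₂h₅²h₆ = 0` in `E′`. -/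
theorem stmt10 :
    component 5 133 = Submodule.span (ZMod 2) {mkE (X (Gen.J 0))} ∧
      mkE (X (Gen.J 0)) ≠ 0 ∧
      mkE (X (Gen.h 0) ^ 3 * X (Gen.h 1) * X (Gen.h 7)) = 0 ∧
      mkE (X (Gen.h 0) * X (Gen.h 1) ^ 2 * X (Gen.h 6) ^ 2) = 0 ∧
      mkE (X (Gen.h 0) * X (Gen.h 2) * X (Gen.h 5) ^ 2 * X (Gen.h 6)) = 0 := by
  refine ⟨le_antisymm ?_ ?_, mkE_X_J_ne, ?_, ?_, ?_⟩
  · rintro x ⟨p, hp, rfl⟩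
    rw [SetLike.mem_coe, Submodule.mem_inf, mem_weightedHomogeneousSubmodule,
      mem_weightedHomogeneousSubmodule] at hp
    obtain ⟨hp5, hp133⟩ := hp
    show mkE p ∈ _
    rw [← support_sum_monomial_coeff p, map_sum]
    apply Submodule.sum_mem
    intro s hs
    have hc : coeff s p ≠ 0 := mem_support_iff.mp hs
    have e1 : (monomial s (coeff s p) : P) = coeff s p • monomial s 1 := by
      rw [smul_monomial]; simp
    rw [e1, map_smul]
    exact Submodule.smul_mem _ _ (mono_mem s (hp5 hc) (hp133 hc))
  · rw [Submodule.span_le]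
    rintro _ rfl
    refine ⟨X (Gen.J 0), Submodule.mem_inf.2 ⟨?_, ?_⟩, rfl⟩
    · exact isWeightedHomogeneous_X _ _ _
    · have hJ : ideg (Gen.J 0) = 133 := by norm_num [ideg]
      exact hJ ▸ isWeightedHomogeneous_X _ _ _
  · exact mkE_eq_zero (mem_rel_of_hh 0 (X (Gen.h 0) ^ 2 * X (Gen.h 7)) (by ring))
  · exact mkE_eq_zero (mem_rel_of_hh 0 (X (Gen.h 1) * X (Gen.h 6) ^ 2) (by ring))
  · exact mkE_eq_zero (mem_rel_of_hh 5 (X (Gen.h 0) * X (Gen.h 2) * X (Gen.h 5)) (by ring))
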